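/- The partial derivative of f(P,u) = log2(1 + Pβ/(uσ²)) + L[log2(u) − log2(e)(1 − 1/u)] with respect to u vanishes at u if and only if u satisfies u = 1 + Pβ/(Lσ² + LPβ/u). -/

import Mathlib

theorem stmt_11 (P β σ2 L : ℝ) (hP : 0 < P) (hβ : 0 < β) (hσ : 0 < σ2) (hL : 1 ≤ L)
    (u : ℝ) (hu : 1 < u) :
    deriv (fun v : ℝ =>
        Real.logb 2 (1 + P * β / (v * σ2)) +
        L * (Real.logb 2 v - Real.logb 2 (Real.exp 1) * (1 - 1 / v))) u = 0 ↔
      u = 1 + P * β / (L * σ2 + L * P * β / u) := by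
  have hu0 : (0:ℝ) < u := lt_trans one_pos hu
  have huσ : u * σ2 ≠ 0 := by positivity
  have hx : (0:ℝ) < 1 + P * β / (u * σ2) := by positivity
  have hlog2 : Real.log 2 ≠ 0 := by
    have := Real.log_pos (by norm_num : (1:ℝ) < 2); linarith
  have hL0 : (0:ℝ) < L := lt_of_lt_of_le one_pos hL
  -- derivative of inner v*σ2
  have h1 : HasDerivAt (fun v : ℝ => v * σ2) σ2 u := by
    simpa using (hasDerivAt_id u).mul_const σ2
  have h2 : HasDerivAt (fun v : ℝ => 1 + P * β / (v * σ2))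
      (P * β * (-σ2 / (u * σ2) ^ 2)) u := by
    simpa [div_eq_mul_inv] using ((h1.inv huσ).const_mul (P * β)).const_add 1
  have h3 : HasDerivAt (fun v : ℝ => Real.log (1 + P * β / (v * σ2)))
      (P * β * (-σ2 / (u * σ2) ^ 2) / (1 + P * β / (u * σ2))) u :=
    h2.log (ne_of_gt hx)
  have h4 : HasDerivAt (fun v : ℝ => Real.log v) u⁻¹ u := Real.hasDerivAt_log (ne_of_gt hu0)
  have h5 : HasDerivAt (fun v : ℝ => 1 - 1 / v) (1 / u ^ 2) u := by
    have h := ((hasDerivAt_id u).inv (ne_of_gt hu0)).const_sub 1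
    have hne : u ≠ 0 := ne_of_gt hu0
    convert h using 1
    · rfl
    · rfl
    · funext v; simp [one_div]
    · simp [neg_div]
  have hg : HasDerivAt (fun v : ℝ =>
        Real.logb 2 (1 + P * β / (v * σ2)) +
        L * (Real.logb 2 v - Real.logb 2 (Real.exp 1) * (1 - 1 / v)))
      ((P * β * (-σ2 / (u * σ2) ^ 2) / (1 + P * β / (u * σ2))) / Real.log 2
        + L * (u⁻¹ / Real.log 2 - (1 / Real.log 2) * (1 / u ^ 2))) u := by
    have := (h3.div_const (Real.log 2)).add
      (((h4.div_const (Real.log 2)).sub (h5.const_mul (1 / Real.log 2))).const_mul L)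
    simp only [Real.logb, Real.log_exp] at *
    convert this using 2 <;> first | rfl | ring
  rw [hg.deriv]
  have hden : L * σ2 + L * P * β / u ≠ 0 := by positivity
  constructor
  · intro h
    field_simp at h ⊢
    have h2 : (Real.log 2)^2 * σ2^2 * u^3 *
        (L*(u-1)*(u*σ2+P*β) - P*β*u) = 0 := by linear_combination (Real.log 2)^2 * σ2^2 * u^3 * h
    have hne : (Real.log 2)^2 * σ2^2 * u^3 ≠ 0 := by positivity
    have hE : L*(u-1)*(u*σ2+P*β) - P*β*u = 0 :=
      (mul_eq_zero.mp h2).resolve_left hne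
    linear_combination hE
  · intro h
    field_simp at h ⊢
    linear_combination h
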